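/- For any Borel probability measure G on the unit sphere S = {z ∈ ℝ^N : |z| = 1} and any ε > 0, one has ε ≤ (1 + ε) · G^{⊗2}{ (z¹,z²) : z¹·z² > −ε }. -/

import Mathlib

open MeasureTheory
open scoped RealInnerProductSpace

/-- For any Borel probability measure `G` on the unit sphere of `ℝ^N` and any `ε > 0`,
`ε ≤ (1 + ε) · G^{⊗2}{(z¹,z²) : z¹·z² > −ε}`. -/
theorem overlap_not_too_negative (N : ℕ) (hN : 1 ≤ N)
    (G : Measure (EuclideanSpace ℝ (Fin N))) [IsProbabilityMeasure G]
    (hG : G (Metric.sphere (0 : EuclideanSpace ℝ (Fin N)) 1)ᶜ = 0)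
    (ε : ℝ) (hε : 0 < ε) :
    ε ≤ (1 + ε) *
      ((G.prod G) {q : EuclideanSpace ℝ (Fin N) × EuclideanSpace ℝ (Fin N) |
        -ε < ⟪q.1, q.2⟫}).toReal := by
  set E := EuclideanSpace ℝ (Fin N)
  set S := Metric.sphere (0 : E) 1 with hS
  set μ := G.prod G with hμ
  set A : Set (E × E) := {q : E × E | -ε < ⟪q.1, q.2⟫} with hAdef
  have hfc : Continuous fun q : E × E => ⟪q.1, q.2⟫ :=
    continuous_fst.inner continuous_snd
  have hA : MeasurableSet A :=
    measurableSet_lt measurable_const hfc.measurable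
  -- a.e. both coordinates are on the sphere
  have hcompl : μ ((S ×ˢ S)ᶜ) = 0 := by
    rw [Set.compl_prod_eq_union]
    refine measure_union_null ?_ ?_ <;>
      · rw [Measure.prod_prod]
        simp [hG]
  have haeμ : ∀ᵐ q ∂μ, q.1 ∈ S ∧ q.2 ∈ S := by
    rw [ae_iff]
    have hs : {q : E × E | ¬(q.1 ∈ S ∧ q.2 ∈ S)} = (S ×ˢ S)ᶜ := by
      ext q; simp [Set.mem_prod]
    rw [hs]; exact hcompl
  have hnorm : ∀ᵐ q ∂μ, ‖q.1‖ = 1 ∧ ‖q.2‖ = 1 := by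
    filter_upwards [haeμ] with q hq
    obtain ⟨h1, h2⟩ := hq
    rw [hS, mem_sphere_zero_iff_norm] at h1 h2
    exact ⟨h1, h2⟩
  -- integrability of the inner product
  have hf_int : Integrable (fun q : E × E => ⟪q.1, q.2⟫) μ := by
    refine Integrable.mono' (integrable_const 1) hfc.aestronglyMeasurable ?_
    filter_upwards [hnorm] with q hq
    calc ‖⟪q.1, q.2⟫‖ ≤ ‖q.1‖ * ‖q.2‖ := norm_inner_le_norm _ _
    _ = 1 := by rw [hq.1, hq.2, one_mul]
  -- integrability of the identity wrt G
  have haeG : ∀ᵐ z ∂G, z ∈ S := by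
    rw [ae_iff]
    exact hG
  have hid_int : Integrable (fun z : E => z) G := by
    refine Integrable.mono' (integrable_const 1) aestronglyMeasurable_id ?_
    filter_upwards [haeG] with z hz
    rw [hS, mem_sphere_zero_iff_norm] at hz
    simp [hz]
  -- ∫ inner = ‖mean‖² ≥ 0
  have hpos : 0 ≤ ∫ q, ⟪q.1, q.2⟫ ∂μ := by
    have h1 : ∫ q, ⟪q.1, q.2⟫ ∂μ = ∫ x, ∫ y, ⟪x, y⟫ ∂G ∂G :=
      integral_prod _ hf_int
    have h2 : ∀ x : E, ∫ y, ⟪x, y⟫ ∂G = ⟪x, ∫ y, y ∂G⟫ := fun x =>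
      integral_inner hid_int x
    have h3 : ∫ x, ⟪x, ∫ y, y ∂G⟫ ∂G = ⟪∫ y, y ∂G, ∫ x, x ∂G⟫ := by
      have : ∀ x : E, ⟪x, ∫ y, y ∂G⟫ = ⟪∫ y, y ∂G, x⟫ := fun x => real_inner_comm _ _
      rw [integral_congr_ae (Filter.Eventually.of_forall this)]
      exact integral_inner hid_int _
    rw [h1]
    simp_rw [h2]
    rw [h3]
    exact real_inner_self_nonneg
  -- dominating function
  set g : E × E → ℝ := fun q => A.indicator (fun _ => 1 + ε) q + (-ε) with hgdef
  have hg_int : Integrable g μ :=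
    ((integrable_const (1 + ε)).indicator hA).add (integrable_const (-ε))
  have hfg : (fun q : E × E => ⟪q.1, q.2⟫) ≤ᵐ[μ] g := by
    filter_upwards [hnorm] with q hq
    by_cases hqA : q ∈ A
    · have : ⟪q.1, q.2⟫ ≤ 1 := by
        calc ⟪q.1, q.2⟫ ≤ ‖⟪q.1, q.2⟫‖ := le_abs_self _
        _ ≤ ‖q.1‖ * ‖q.2‖ := norm_inner_le_norm _ _
        _ = 1 := by rw [hq.1, hq.2, one_mul]
      simp only [hgdef, Set.indicator_of_mem hqA]
      linarith
    · have : ¬ (-ε < ⟪q.1, q.2⟫) := hqA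
      simp only [hgdef, Set.indicator_of_notMem hqA]
      linarith [not_lt.mp this]
  have hgint_val : ∫ q, g q ∂μ = (1 + ε) * (μ A).toReal - ε := by
    rw [hgdef]
    rw [integral_add ((integrable_const (1 + ε)).indicator hA) (integrable_const (-ε))]
    rw [integral_indicator_const _ hA, integral_const]
    have : μ.real Set.univ = 1 := by simp [hμ]
    rw [this]
    simp [smul_eq_mul, Measure.real]
    ring
  have hmono : ∫ q, ⟪q.1, q.2⟫ ∂μ ≤ ∫ q, g q ∂μ :=
    integral_mono_ae hf_int hg_int hfg
  have : 0 ≤ (1 + ε) * (μ A).toReal - ε := by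
    rw [← hgint_val]
    exact le_trans hpos hmono
  linarith
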